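/- Let E be an elliptic curve over ℚ with Weierstrass equation y² = x³ − x. The rational map f(x, y) = −(1 − x)²/(4x) defines a finite morphism E → P¹ of degree 4 which is unramified outside {0, 1, ∞}. -/
import Mathlib


/-- The rational map `f(x, y) = -(1 - x)² / (4x)` on the elliptic curve `y² = x³ - x`
is a finite morphism `E → ℙ¹` of degree `4`, unramified outside `{0, 1, ∞}`:
over any algebraically closed field of characteristic zero (e.g. `ℚ̄`), for every
`t ∉ {0, 1, ∞}` the fiber `f⁻¹(t)` consists of exactly `4 = deg f` affine points of `E`
(the point at infinity `O` of `E` lies over `∞`, and points with `x = 0` over `∞`). -/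
theorem stmt10 (K : Type*) [Field K] [IsAlgClosed K] [CharZero K]
    (t : K) (ht0 : t ≠ 0) (ht1 : t ≠ 1) :
    Set.ncard {P : K × K | P.2 ^ 2 = P.1 ^ 3 - P.1 ∧ P.1 ≠ 0 ∧
      -(1 - P.1) ^ 2 / (4 * P.1) = t} = 4 := by
  obtain ⟨s, hs⟩ := IsAlgClosed.exists_pow_nat_eq (t ^ 2 - t) two_pos
  have hs0 : s ≠ 0 := by
    intro h
    apply ht1
    have : t * (t - 1) = 0 := by rw [h] at hs; linear_combination -hs
    rcases mul_eq_zero.1 this with h | h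
    · exact absurd h ht0
    · exact sub_eq_zero.1 h
  set x₁ : K := 1 - 2 * t + 2 * s with hx₁def
  set x₂ : K := 1 - 2 * t - 2 * s with hx₂def
  have hx₁ : x₁ ^ 2 + (4 * t - 2) * x₁ + 1 = 0 := by
    rw [hx₁def]; linear_combination 4 * hs
  have hx₂ : x₂ ^ 2 + (4 * t - 2) * x₂ + 1 = 0 := by
    rw [hx₂def]; linear_combination 4 * hs
  have hne : x₁ ≠ x₂ := by
    rw [hx₁def, hx₂def]
    intro h
    apply hs0
    have : (4 : K) * s = 0 := by linear_combination h
    have h4 : (4 : K) ≠ 0 := by norm_num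
    exact (mul_eq_zero.1 this).resolve_left h4
  -- generic facts about roots of the quadratic
  have hroot : ∀ x : K, x ^ 2 + (4 * t - 2) * x + 1 = 0 →
      x ≠ 0 ∧ x ≠ 1 ∧ x ≠ -1 ∧ -(1 - x) ^ 2 / (4 * x) = t := by
    intro x hx
    have hx0 : x ≠ 0 := by
      intro h; rw [h] at hx; simp at hx
    have hxone : x ≠ 1 := by
      intro h; rw [h] at hx
      apply ht0
      have : (4 : K) * t = 0 := by linear_combination hx
      exact (mul_eq_zero.1 this).resolve_left (by norm_num)
    have hxneg : x ≠ -1 := by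
      intro h; rw [h] at hx
      apply ht1
      have : (4 : K) * (1 - t) = 0 := by linear_combination hx
      have := (mul_eq_zero.1 this).resolve_left (by norm_num : (4:K) ≠ 0)
      linear_combination -this
    refine ⟨hx0, hxone, hxneg, ?_⟩
    rw [div_eq_iff (by exact mul_ne_zero (by norm_num) hx0)]
    linear_combination -hx
  obtain ⟨h10, h11, h1n, h1f⟩ := hroot x₁ hx₁
  obtain ⟨h20, h21, h2n, h2f⟩ := hroot x₂ hx₂
  obtain ⟨y₁, hy₁⟩ := IsAlgClosed.exists_pow_nat_eq (x₁ ^ 3 - x₁) two_pos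
  obtain ⟨y₂, hy₂⟩ := IsAlgClosed.exists_pow_nat_eq (x₂ ^ 3 - x₂) two_pos
  have hy₁0 : y₁ ≠ 0 := by
    intro h
    rw [h] at hy₁
    have : x₁ * (x₁ - 1) * (x₁ + 1) = 0 := by linear_combination -hy₁
    rcases mul_eq_zero.1 this with h | h
    · rcases mul_eq_zero.1 h with h | h
      · exact h10 h
      · exact h11 (sub_eq_zero.1 h)
    · exact h1n (eq_neg_of_add_eq_zero_left h)
  have hy₂0 : y₂ ≠ 0 := by
    intro h
    rw [h] at hy₂
    have : x₂ * (x₂ - 1) * (x₂ + 1) = 0 := by linear_combination -hy₂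
    rcases mul_eq_zero.1 this with h | h
    · rcases mul_eq_zero.1 h with h | h
      · exact h20 h
      · exact h21 (sub_eq_zero.1 h)
    · exact h2n (eq_neg_of_add_eq_zero_left h)
  have hyy₁ : y₁ ≠ -y₁ := by
    intro h
    apply hy₁0
    have : (2 : K) * y₁ = 0 := by linear_combination h
    exact (mul_eq_zero.1 this).resolve_left (by norm_num)
  have hyy₂ : y₂ ≠ -y₂ := by
    intro h
    apply hy₂0
    have : (2 : K) * y₂ = 0 := by linear_combination h
    exact (mul_eq_zero.1 this).resolve_left (by norm_num)
  have hset : {P : K × K | P.2 ^ 2 = P.1 ^ 3 - P.1 ∧ P.1 ≠ 0 ∧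
      -(1 - P.1) ^ 2 / (4 * P.1) = t} =
      {(x₁, y₁), (x₁, -y₁), (x₂, y₂), (x₂, -y₂)} := by
    ext ⟨x, y⟩
    simp only [Set.mem_setOf_eq, Set.mem_insert_iff, Set.mem_singleton_iff, Prod.mk.injEq]
    constructor
    · rintro ⟨hy, hx0, hf⟩
      have heq : -(1 - x) ^ 2 = t * (4 * x) :=
        (div_eq_iff (mul_ne_zero (by norm_num) hx0)).1 hf
      have hquad : x ^ 2 + (4 * t - 2) * x + 1 = 0 := by linear_combination -heq
      have hfac : (x - x₁) * (x - x₂) = 0 := by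
        rw [hx₁def, hx₂def]; linear_combination hquad - 4 * hs
      rcases mul_eq_zero.1 hfac with h | h
      · have hx : x = x₁ := sub_eq_zero.1 h
        have : (y - y₁) * (y + y₁) = 0 := by
          rw [hx] at hy; linear_combination hy - hy₁
        rcases mul_eq_zero.1 this with h' | h'
        · exact Or.inl ⟨hx, sub_eq_zero.1 h'⟩
        · exact Or.inr (Or.inl ⟨hx, eq_neg_of_add_eq_zero_left h'⟩)
      · have hx : x = x₂ := sub_eq_zero.1 h
        have : (y - y₂) * (y + y₂) = 0 := by
          rw [hx] at hy; linear_combination hy - hy₂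
        rcases mul_eq_zero.1 this with h' | h'
        · exact Or.inr (Or.inr (Or.inl ⟨hx, sub_eq_zero.1 h'⟩))
        · exact Or.inr (Or.inr (Or.inr ⟨hx, eq_neg_of_add_eq_zero_left h'⟩))
    · rintro (⟨hx, hy⟩ | ⟨hx, hy⟩ | ⟨hx, hy⟩ | ⟨hx, hy⟩) <;> subst hx <;> subst hy
      · exact ⟨hy₁, h10, h1f⟩
      · exact ⟨by linear_combination hy₁, h10, h1f⟩
      · exact ⟨hy₂, h20, h2f⟩
      · exact ⟨by linear_combination hy₂, h20, h2f⟩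
  rw [hset]
  have hA : (x₁, y₁) ∉ ({(x₁, -y₁), (x₂, y₂), (x₂, -y₂)} : Set (K × K)) := by
    simp only [Set.mem_insert_iff, Set.mem_singleton_iff, Prod.mk.injEq]
    push_neg
    exact ⟨fun _ => hyy₁, fun h => absurd h hne, fun h => absurd h hne⟩
  have hB : (x₁, -y₁) ∉ ({(x₂, y₂), (x₂, -y₂)} : Set (K × K)) := by
    simp only [Set.mem_insert_iff, Set.mem_singleton_iff, Prod.mk.injEq]
    push_neg
    exact ⟨fun h => absurd h hne, fun h => absurd h hne⟩
  have hC : ((x₂, y₂) : K × K) ≠ (x₂, -y₂) := by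
    simp only [ne_eq, Prod.mk.injEq, not_and]
    exact fun _ => hyy₂
  rw [Set.ncard_insert_of_notMem hA, Set.ncard_insert_of_notMem hB, Set.ncard_pair hC]
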